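/- Let h : O → O' be a Borel measurable map such that (1) for every Borel set A' ⊆ O' with A' ⊆ h(O) and A' bounded away from C', the preimage h^{-1}(A') is bounded away from C, and (2) μ(D_h) = 0, where D_h ⊆ O is the set of points at which h is discontinuous. If μ_n → μ in M_O, then the pushforward measures μ_n ∘ h^{-1} and μ ∘ h^{-1} belong to M_{O'} and μ_n ∘ h^{-1} → μ ∘ h^{-1} in M_{O'}; equivalently, ∫ (f' ∘ h) dμ_n → ∫ (f' ∘ h) dμ for every f' ∈ C_{O'}. -/

import Mathlib

open MeasureTheory Metric Filter Topology Set
open scoped ENNReal NNReal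

noncomputable section

variable {S : Type*} [MetricSpace S] [MeasurableSpace S]

/-- `A` is bounded away from `C`: `A ⊆ S \ C^r` for some `r > 0`. -/
def BddAway (C A : Set S) : Prop := ∃ r > 0, ∀ x ∈ A, r ≤ infDist x C

/-- The class `C_O` of test functions: bounded, nonnegative, continuous on `O = S \ C`,
and vanishing on `C^r` for some `r > 0` (extended by `0` to all of `S`). -/
def IsCO (C : Set S) (f : S → ℝ) : Prop :=
  ContinuousOn f Cᶜ ∧ (∀ x, 0 ≤ f x) ∧ (∃ B : ℝ, ∀ x, f x ≤ B) ∧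
    ∃ r > 0, ∀ x, infDist x C < r → f x = 0

/-- The class `M_O`: Borel measures on `O = S \ C` (i.e. giving no mass to `C`)
that are finite on `S \ C^r` for each `r > 0`. -/
def MemMO (C : Set S) (μ : Measure S) : Prop :=
  μ C = 0 ∧ ∀ r : ℝ, 0 < r → μ {x | r ≤ infDist x C} < ⊤

/-- Convergence `μ_n → μ` in `M_O`. -/
def MOTendsto (C : Set S) (μn : ℕ → Measure S) (μ : Measure S) : Prop :=
  ∀ f : S → ℝ, IsCO C f →
    Tendsto (fun n => ∫ x, f x ∂ μn n) atTop (𝓝 (∫ x, f x ∂ μ))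

section Aux

variable {C : Set S}

lemma isCO_continuous (hC : IsClosed C) {f : S → ℝ} (hf : IsCO C f) : Continuous f := by
  obtain ⟨hcont, hnn, hBd, r, hr, hvan⟩ := hf
  rw [continuous_iff_continuousAt]
  intro x
  by_cases hx : x ∈ C
  · have hU : {y : S | infDist y C < r} ∈ 𝓝 x :=
      (isOpen_lt (continuous_infDist_pt C) continuous_const).mem_nhds
        (by simpa [mem_setOf_eq, infDist_zero_of_mem hx] using hr)
    have hev : f =ᶠ[𝓝 x] fun _ => (0 : ℝ) := by
      filter_upwards [hU] with y hy using hvan y hy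
    exact (continuousAt_congr hev).mpr continuousAt_const
  · exact (hcont x hx).continuousAt (hC.isOpen_compl.mem_nhds hx)

lemma measurableSet_level [OpensMeasurableSpace S] (C : Set S) (r : ℝ) :
    MeasurableSet {x : S | r ≤ infDist x C} :=
  (isClosed_le continuous_const (continuous_infDist_pt C)).measurableSet

lemma isCO_integrable [OpensMeasurableSpace S] (hC : IsClosed C) {f : S → ℝ} (hf : IsCO C f)
    {μ : Measure S} (hμ : MemMO C μ) : Integrable f μ := by
  have hfc : Continuous f := isCO_continuous hC hf
  obtain ⟨hcont, hnn, ⟨B, hB⟩, r, hr, hvan⟩ := hf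
  refine ⟨hfc.aestronglyMeasurable, ?_⟩
  have hbound : ∀ x : S, (‖f x‖₊ : ℝ≥0∞) ≤
      {x : S | r ≤ infDist x C}.indicator (fun _ => ENNReal.ofReal B) x := by
    intro x
    by_cases hx : r ≤ infDist x C
    · rw [Set.indicator_of_mem (show x ∈ {x : S | r ≤ infDist x C} from hx),
        ← enorm_eq_nnnorm, Real.enorm_eq_ofReal (hnn x)]
      exact ENNReal.ofReal_le_ofReal (hB x)
    · push_neg at hx
      rw [Set.indicator_of_notMem
        (show x ∉ {x : S | r ≤ infDist x C} by simpa using hx.not_ge), hvan x hx]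
      simp
  refine lt_of_le_of_lt (lintegral_mono hbound) ?_
  rw [lintegral_indicator (measurableSet_level C r)]
  simp only [lintegral_const, Measure.restrict_apply MeasurableSet.univ, Set.univ_inter]
  exact ENNReal.mul_lt_top ENNReal.ofReal_lt_top (hμ.2 r hr)

lemma frontier_lt_subset (F : S → ℝ) (t : ℝ) :
    frontier {x : S | t < F x} ⊆ {x | ¬ ContinuousAt F x} ∪ {x | F x = t} := by
  intro x hx
  by_cases hcont : ContinuousAt F x
  · right
    rw [frontier_eq_closure_inter_closure] at hx
    have h1 : t ≤ F x := by
      by_contra hlt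
      push_neg at hlt
      have hev : ∀ᶠ y in 𝓝 x, F y < t := hcont.eventually_lt continuousAt_const hlt
      rcases mem_closure_iff_nhds.mp hx.1 _ hev with ⟨y, hy1, hy2⟩
      simp only [mem_setOf_eq] at hy1 hy2
      linarith
    have h2 : F x ≤ t := by
      by_contra hlt
      push_neg at hlt
      have hev : ∀ᶠ y in 𝓝 x, t < F y := continuousAt_const.eventually_lt hcont hlt
      rcases mem_closure_iff_nhds.mp hx.2 _ hev with ⟨y, hy1, hy2⟩
      simp only [mem_compl_iff, mem_setOf_eq] at hy1 hy2
      exact hy2 hy1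
    exact le_antisymm h2 h1
  · exact Or.inl hcont

lemma tendsto_measure_of_null_frontier_fm [OpensMeasurableSpace S]
    {ν : FiniteMeasure S} {νs : ℕ → FiniteMeasure S}
    (hT : Tendsto νs atTop (𝓝 ν)) {E : Set S}
    (hE : (ν : Measure S) (frontier E) = 0) :
    Tendsto (fun n => (νs n : Measure S) E) atTop (𝓝 ((ν : Measure S) E)) := by
  have hclE : (atTop.limsup fun n => (νs n : Measure S) (closure E))
      ≤ (ν : Measure S) (closure E) :=
    FiniteMeasure.limsup_measure_closed_le_of_tendsto hT isClosed_closure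
  have hclEc : (atTop.limsup fun n => (νs n : Measure S) (closure Eᶜ))
      ≤ (ν : Measure S) (closure Eᶜ) :=
    FiniteMeasure.limsup_measure_closed_le_of_tendsto hT isClosed_closure
  have hmass : Tendsto (fun n => (νs n : Measure S) univ) atTop (𝓝 ((ν : Measure S) univ)) := by
    have := ENNReal.tendsto_coe.mpr hT.mass
    simpa [FiniteMeasure.ennreal_mass] using this
  have hfr : (ν : Measure S) (closure E) = (ν : Measure S) (interior E) := by
    apply le_antisymm
    · calc (ν : Measure S) (closure E)
          = (ν : Measure S) (interior E ∪ frontier E) := by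
            rw [← closure_eq_interior_union_frontier]
        _ ≤ (ν : Measure S) (interior E) + (ν : Measure S) (frontier E) := measure_union_le _ _
        _ = (ν : Measure S) (interior E) := by rw [hE, add_zero]
    · exact measure_mono (interior_subset_closure)
  have hEeq1 : (ν : Measure S) E = (ν : Measure S) (closure E) :=
    le_antisymm (measure_mono subset_closure) (by rw [hfr]; exact measure_mono interior_subset)
  have hEeq2 : (ν : Measure S) E = (ν : Measure S) (interior E) := hEeq1.trans hfr
  have hcompl : ∀ m : Measure S, IsFiniteMeasure m →
      m univ - m (closure Eᶜ) = m (interior E) := by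
    intro m hm
    rw [closure_compl, measure_compl isOpen_interior.measurableSet (measure_ne_top m _)]
    exact ENNReal.sub_sub_cancel (measure_ne_top m _) (measure_mono (subset_univ _))
  rw [ENNReal.tendsto_nhds (measure_ne_top _ _)]
  intro ε hε
  have hup : ∀ᶠ n in atTop, (νs n : Measure S) (closure E) < (ν : Measure S) E + ε := by
    have hlt : (atTop.limsup fun n => (νs n : Measure S) (closure E)) < (ν : Measure S) E + ε := by
      refine lt_of_le_of_lt hclE ?_
      rw [← hEeq1]
      exact ENNReal.lt_add_right (measure_ne_top _ _) hε.ne'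
    exact eventually_lt_of_limsup_lt hlt
  have hdn : ∀ᶠ n in atTop,
      (νs n : Measure S) (closure Eᶜ) < (ν : Measure S) (closure Eᶜ) + ε/2 := by
    exact eventually_lt_of_limsup_lt (lt_of_le_of_lt hclEc (ENNReal.lt_add_right
      (measure_ne_top _ _) (ENNReal.half_pos hε.ne').ne'))
  have hmn : ∀ᶠ n in atTop, (νs n : Measure S) univ ∈
      Icc ((ν : Measure S) univ - ε/2) ((ν : Measure S) univ + ε/2) :=
    (ENNReal.tendsto_nhds (measure_ne_top _ _)).mp hmass (ε/2) (ENNReal.half_pos hε.ne')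
  filter_upwards [hup, hdn, hmn] with n h1 h2 h3
  constructor
  · have key : (ν : Measure S) E - ε ≤
        (νs n : Measure S) univ - (νs n : Measure S) (closure Eᶜ) := by
      have e1 : (ν : Measure S) E - ε
          = (ν : Measure S) univ - ((ν : Measure S) (closure Eᶜ) + ε) := by
        rw [hEeq2, ← hcompl ν inferInstance, tsub_tsub]
      rw [e1]
      have s1 : (ν : Measure S) univ ≤ (νs n : Measure S) univ + ε/2 :=
        tsub_le_iff_right.mp h3.1
      have s2 : (νs n : Measure S) (closure Eᶜ) + ε/2 ≤ (ν : Measure S) (closure Eᶜ) + ε := by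
        calc (νs n : Measure S) (closure Eᶜ) + ε/2
            ≤ ((ν : Measure S) (closure Eᶜ) + ε/2) + ε/2 := add_le_add_left h2.le _
          _ = (ν : Measure S) (closure Eᶜ) + ε := by rw [add_assoc, ENNReal.add_halves]
      calc (ν : Measure S) univ - ((ν : Measure S) (closure Eᶜ) + ε)
          ≤ ((νs n : Measure S) univ + ε/2) - ((ν : Measure S) (closure Eᶜ) + ε) :=
            tsub_le_tsub s1 le_rfl
        _ ≤ ((νs n : Measure S) univ + ε/2) - ((νs n : Measure S) (closure Eᶜ) + ε/2) :=
            tsub_le_tsub le_rfl s2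
        _ ≤ (νs n : Measure S) univ - (νs n : Measure S) (closure Eᶜ) := by
            rw [tsub_le_iff_right]
            calc (νs n : Measure S) univ + ε/2
                ≤ (((νs n : Measure S) univ - (νs n : Measure S) (closure Eᶜ))
                    + (νs n : Measure S) (closure Eᶜ)) + ε/2 :=
                  add_le_add_left le_tsub_add _
              _ = ((νs n : Measure S) univ - (νs n : Measure S) (closure Eᶜ))
                    + ((νs n : Measure S) (closure Eᶜ) + ε/2) := by rw [add_assoc]
    calc (ν : Measure S) E - ε
        ≤ (νs n : Measure S) univ - (νs n : Measure S) (closure Eᶜ) := key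
      _ = (νs n : Measure S) (interior E) := hcompl (νs n) inferInstance
      _ ≤ (νs n : Measure S) E := measure_mono interior_subset
  · exact le_of_lt (lt_of_le_of_lt (measure_mono subset_closure) h1)

lemma keyW [OpensMeasurableSpace S] {ν : FiniteMeasure S} {νs : ℕ → FiniteMeasure S}
    (hT : Tendsto νs atTop (𝓝 ν)) {F : S → ℝ} (hFm : Measurable F) (hFnn : ∀ x, 0 ≤ F x)
    {B : ℝ} (hFB : ∀ x, F x ≤ B)
    (hcont : (ν : Measure S) {x | ¬ ContinuousAt F x} = 0) :
    Tendsto (fun n => ∫ x, F x ∂(νs n : Measure S)) atTop (𝓝 (∫ x, F x ∂(ν : Measure S))) := by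
  have hint : ∀ (m : Measure S), IsFiniteMeasure m → Integrable F m := fun m hm =>
    Integrable.mono' (integrable_const B) hFm.aestronglyMeasurable
      (Eventually.of_forall fun x => by rw [Real.norm_of_nonneg (hFnn x)]; exact hFB x)
  obtain ⟨M, hM⟩ : ∃ M : ℝ≥0, ∀ n, (νs n).mass ≤ M := by
    obtain ⟨M, hM⟩ := hT.mass.bddAbove_range
    exact ⟨M, fun n => hM ⟨n, rfl⟩⟩
  have layern : ∀ n, ∫ x, F x ∂(νs n : Measure S)
      = ∫ t in Set.Ioi (0:ℝ), ((νs n : Measure S) {a | t < F a}).toReal :=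
    fun n => (hint _ inferInstance).integral_eq_integral_meas_lt (Eventually.of_forall hFnn)
  have layer : ∫ x, F x ∂(ν : Measure S)
      = ∫ t in Set.Ioi (0:ℝ), ((ν : Measure S) {a | t < F a}).toReal :=
    (hint _ inferInstance).integral_eq_integral_meas_lt (Eventually.of_forall hFnn)
  rw [layer]
  simp only [layern]
  have hmeasn : ∀ n, AEStronglyMeasurable (fun t : ℝ => ((νs n : Measure S) {a | t < F a}).toReal)
      (volume.restrict (Set.Ioi 0)) := by
    intro n
    apply Measurable.aestronglyMeasurable
    apply Measurable.ennreal_toReal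
    exact Antitone.measurable fun s t hst => measure_mono fun a ha => lt_of_le_of_lt hst ha
  have hbd_int : Integrable ((Set.Ioc (0:ℝ) B).indicator fun _ => (M:ℝ))
      (volume.restrict (Set.Ioi 0)) := by
    rw [integrable_indicator_iff measurableSet_Ioc]
    apply (integrableOn_const_iff).mpr
    exact Or.inr (lt_of_le_of_lt (Measure.restrict_apply_le _ _) measure_Ioc_lt_top)
  have hb : ∀ n, ∀ᵐ t ∂(volume.restrict (Set.Ioi (0:ℝ))),
      ‖((νs n : Measure S) {a | t < F a}).toReal‖
        ≤ (Set.Ioc (0:ℝ) B).indicator (fun _ => (M:ℝ)) t := by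
    intro n
    filter_upwards [ae_restrict_mem measurableSet_Ioi] with t ht
    rw [Real.norm_of_nonneg ENNReal.toReal_nonneg]
    by_cases htB : t ≤ B
    · rw [Set.indicator_of_mem (show t ∈ Set.Ioc (0:ℝ) B from ⟨ht, htB⟩)]
      calc ((νs n : Measure S) {a | t < F a}).toReal
          ≤ ((νs n : Measure S) univ).toReal :=
            ENNReal.toReal_mono (measure_ne_top _ _) (measure_mono (subset_univ _))
        _ = ((νs n).mass : ℝ) := by rw [← FiniteMeasure.ennreal_mass, ENNReal.coe_toReal]
        _ ≤ (M : ℝ) := by exact_mod_cast hM n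
    · rw [Set.indicator_of_notMem (show t ∉ Set.Ioc (0:ℝ) B from fun hmem => htB hmem.2)]
      have he : {a : S | t < F a} = ∅ := by
        ext a
        simp only [mem_setOf_eq, mem_empty_iff_false, iff_false, not_lt]
        exact le_trans (hFB a) (le_of_not_ge htB)
      simp [he]
  have hlim : ∀ᵐ t ∂(volume.restrict (Set.Ioi (0:ℝ))),
      Tendsto (fun n => ((νs n : Measure S) {a | t < F a}).toReal) atTop
        (𝓝 (((ν : Measure S) {a | t < F a}).toReal)) := by
    have hcnt : Set.Countable {t : ℝ | 0 < (ν : Measure S) {a | F a = t}} :=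
      Measure.countable_meas_level_set_pos hFm
    have hnull : (volume.restrict (Set.Ioi (0:ℝ)))
        {t : ℝ | 0 < (ν : Measure S) {a | F a = t}} = 0 :=
      le_antisymm (le_trans (Measure.restrict_apply_le _ _)
        (le_of_eq (hcnt.measure_zero _))) zero_le
    filter_upwards [(measure_eq_zero_iff_ae_notMem.mp hnull)] with t ht
    have hlev : (ν : Measure S) {a | F a = t} = 0 := le_antisymm (not_lt.mp ht) zero_le
    have hfr : (ν : Measure S) (frontier {a | t < F a}) = 0 := by
      apply measure_mono_null (frontier_lt_subset F t)
      apply le_antisymm _ zero_le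
      calc (ν : Measure S) ({x | ¬ ContinuousAt F x} ∪ {x | F x = t})
          ≤ (ν : Measure S) {x | ¬ ContinuousAt F x} + (ν : Measure S) {x | F x = t} :=
            measure_union_le _ _
        _ = 0 := by rw [hcont, hlev, add_zero]
    exact (ENNReal.tendsto_toReal (measure_ne_top _ _)).comp
      (tendsto_measure_of_null_frontier_fm hT hfr)
  exact tendsto_integral_of_dominated_convergence _ hmeasn hbd_int hb hlim

lemma lemmaL [BorelSpace S] {S' : Type*} [MetricSpace S'] [MeasurableSpace S'] [BorelSpace S']
    {C : Set S} {C' : Set S'} {h : S → S'} (hmaps : Set.MapsTo h Cᶜ C'ᶜ)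
    (hbdd : ∀ A' : Set S', MeasurableSet A' → A' ⊆ C'ᶜ → A' ⊆ h '' Cᶜ →
        BddAway C' A' → BddAway C (Cᶜ ∩ h ⁻¹' A'))
    {A' : Set S'} {r' : ℝ} (hr' : 0 < r') (hA' : ∀ y ∈ A', r' ≤ infDist y C') :
    ∃ ρ > 0, ∀ x, x ∈ Cᶜ → h x ∈ A' → ρ ≤ infDist x C := by
  by_contra hcon
  push_neg at hcon
  have hex : ∀ k : ℕ, ∃ x : S, x ∈ Cᶜ ∧ h x ∈ A' ∧ infDist x C < 1/((k:ℝ)+1) := by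
    intro k
    obtain ⟨x, hx1, hx2, hx3⟩ := hcon (1/((k:ℝ)+1)) (by positivity)
    exact ⟨x, hx1, hx2, hx3⟩
  choose xs h1 h2 h3 using hex
  obtain ⟨ρ, hρ0, hρ⟩ := hbdd (Set.range fun k => h (xs k))
    ((Set.countable_range _).measurableSet)
    (by rintro _ ⟨k, rfl⟩; exact hmaps (h1 k))
    (by rintro _ ⟨k, rfl⟩; exact ⟨xs k, h1 k, rfl⟩)
    ⟨r', hr', by rintro _ ⟨k, rfl⟩; exact hA' _ (h2 k)⟩
  obtain ⟨k, hk⟩ := exists_nat_one_div_lt hρ0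
  have hmem : xs k ∈ Cᶜ ∩ h ⁻¹' (Set.range fun k => h (xs k)) := ⟨h1 k, ⟨k, rfl⟩⟩
  have := hρ (xs k) hmem
  have h3k := h3 k
  linarith

end Aux

/-- Mapping theorem: if `h : O → O'` is Borel measurable, preimages of sets bounded
away from `C'` (contained in `h(O)`) are bounded away from `C`, and `μ` gives no mass
to the discontinuity set of `h`, then `μ_n → μ` in `M_O` implies that the pushforwards
lie in `M_{O'}` and converge in `M_{O'}`. -/
theorem stmt5 [BorelSpace S] {S' : Type*} [MetricSpace S'] [MeasurableSpace S'] [BorelSpace S']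
    [CompleteSpace S] [TopologicalSpace.SeparableSpace S]
    [CompleteSpace S'] [TopologicalSpace.SeparableSpace S']
    (C : Set S) (hC : IsClosed C) (C' : Set S') (hC' : IsClosed C')
    (μ : Measure S) (μn : ℕ → Measure S)
    (hμ : MemMO C μ) (hμn : ∀ n, MemMO C (μn n))
    (h : S → S') (hmaps : Set.MapsTo h Cᶜ C'ᶜ)
    (hmeas : Measurable (Cᶜ.restrict h))
    (hbdd : ∀ A' : Set S', MeasurableSet A' → A' ⊆ C'ᶜ → A' ⊆ h '' Cᶜ →
        BddAway C' A' → BddAway C (Cᶜ ∩ h ⁻¹' A'))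
    (hdisc : μ {x | x ∈ Cᶜ ∧ ¬ ContinuousWithinAt h Cᶜ x} = 0)
    (hconv : MOTendsto C μn μ) :
    MemMO C' (Measure.map h μ) ∧ (∀ n, MemMO C' (Measure.map h (μn n))) ∧
    MOTendsto C' (fun n => Measure.map h (μn n)) (Measure.map h μ) ∧
    ∀ f' : S' → ℝ, IsCO C' f' →
      Tendsto (fun n => ∫ x, f' (h x) ∂ μn n) atTop (𝓝 (∫ x, f' (h x) ∂ μ)) := by
  classical
  by_cases hS : Nonempty S
  case neg =>
    have hE : IsEmpty S := not_nonempty_iff.mp hS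
    have hz : ∀ (m : Measure S), m = 0 := by
      intro m
      ext s hs
      have : s = ∅ := Set.eq_empty_of_isEmpty s
      simp [this]
    have hmap : ∀ m : Measure S, Measure.map h m = 0 := fun m => by rw [hz m]; simp
    refine ⟨?_, ?_, ?_, ?_⟩
    · rw [hmap]
      exact ⟨by simp, fun r hr => by simp⟩
    · intro n
      rw [hmap]
      exact ⟨by simp, fun r hr => by simp⟩
    · intro f hf
      simp only [hmap]
      simpa using tendsto_const_nhds
    · intro f hf
      simp only [hz μ, hz (μn _)]
      simpa using tendsto_const_nhds
  case pos =>
  obtain ⟨x0⟩ := hS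
  set y0 : S' := if hne : C'.Nonempty then hne.choose else h x0 with hy0def
  have hy0 : C'.Nonempty → y0 ∈ C' := by
    intro hne
    rw [hy0def, dif_pos hne]
    exact hne.choose_spec
  set g : S → S' := fun x => if x ∈ C then y0 else h x with hgdef
  have hgC : ∀ x ∈ C, g x = y0 := fun x hx => if_pos hx
  have hgC' : ∀ x, x ∉ C → g x = h x := fun x hx => if_neg hx
  have hCm : MeasurableSet C := hC.measurableSet
  have meas_g : Measurable g := by
    intro B hB
    have himg : Cᶜ ∩ h ⁻¹' B = Subtype.val '' ((Cᶜ.restrict h) ⁻¹' B) := by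
      ext x
      simp only [Set.mem_inter_iff, Set.mem_preimage, Set.mem_image, Set.mem_compl_iff]
      constructor
      · rintro ⟨hx1, hx2⟩
        exact ⟨⟨x, hx1⟩, hx2, rfl⟩
      · rintro ⟨⟨a, ha⟩, h1, rfl⟩
        exact ⟨ha, h1⟩
    have hm1 : MeasurableSet (Cᶜ ∩ h ⁻¹' B) := by
      rw [himg]
      exact MeasurableSet.subtype_image hCm.compl (hmeas hB)
    have hpre : g ⁻¹' B = (Cᶜ ∩ h ⁻¹' B) ∪ (C ∩ (if y0 ∈ B then Set.univ else ∅)) := by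
      ext x
      by_cases hx : x ∈ C <;> by_cases hy : y0 ∈ B <;>
        simp [hgdef, hx, hy]
    rw [hpre]
    apply hm1.union
    by_cases hy : y0 ∈ B <;> simp [hy, hCm]
  have hgae : ∀ m : Measure S, m C = 0 → g =ᵐ[m] h := by
    intro m hm
    rw [Filter.EventuallyEq, ae_iff]
    apply measure_mono_null _ hm
    intro x hx
    by_contra hxc
    exact hx (hgC' x hxc)
  have hmapeq : ∀ m : Measure S, m C = 0 → Measure.map h m = Measure.map g m :=
    fun m hm => Measure.map_congr (hgae m hm).symm
  have hL : ∀ r' : ℝ, 0 < r' → ∃ ρ > 0, ∀ x, x ∈ Cᶜ → r' ≤ infDist (h x) C' →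
      ρ ≤ infDist x C := by
    intro r' hr'
    obtain ⟨ρ, h0, hρ⟩ := lemmaL (A' := {y : S' | r' ≤ infDist y C'}) hmaps hbdd hr'
      (fun y hy => hy)
    exact ⟨ρ, h0, fun x hx hhx => hρ x hx hhx⟩
  have part1 : ∀ m : Measure S, MemMO C m → MemMO C' (Measure.map h m) := by
    intro m hm
    rw [hmapeq m hm.1]
    constructor
    · rw [Measure.map_apply meas_g hC'.measurableSet]
      apply measure_mono_null _ hm.1
      intro x hx
      by_contra hxC
      have : g x = h x := hgC' x hxC
      rw [Set.mem_preimage, this] at hx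
      exact hmaps hxC hx
    · intro r hr
      rw [Measure.map_apply meas_g (measurableSet_level C' r)]
      by_cases hCne : C'.Nonempty
      · obtain ⟨ρ, hρ0, hρ⟩ := hL r hr
        refine lt_of_le_of_lt (measure_mono ?_) (hm.2 ρ hρ0)
        intro x hx
        rw [Set.mem_preimage, Set.mem_setOf_eq] at hx
        by_cases hxC : x ∈ C
        · exfalso
          rw [hgC x hxC, infDist_zero_of_mem (hy0 hCne)] at hx
          exact absurd hx (not_le.mpr hr)
        · rw [hgC' x hxC] at hx
          exact hρ x hxC hx
      · have hc'e : C' = ∅ := not_nonempty_iff_eq_empty.mp hCne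
        have he : {y : S' | r ≤ infDist y C'} = ∅ := by
          ext y
          simp [hc'e, infDist_empty, not_le.mpr hr]
        rw [he]
        simp
  have key : ∀ f' : S' → ℝ, IsCO C' f' →
      Tendsto (fun n => ∫ x, f' (h x) ∂ μn n) atTop (𝓝 (∫ x, f' (h x) ∂ μ)) := by
    intro f' hf'
    have hf'cont : Continuous f' := isCO_continuous hC' hf'
    obtain ⟨hf'c, hf'nn, ⟨B, hB⟩, r', hr', hvan⟩ := hf'
    by_cases hCne : C'.Nonempty
    case neg =>
      have hc'e : C' = ∅ := not_nonempty_iff_eq_empty.mp hCne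
      have hzero : ∀ y : S', f' y = 0 := fun y => hvan y (by rw [hc'e, infDist_empty]; exact hr')
      simp only [hzero, integral_zero]
      exact tendsto_const_nhds
    case pos =>
    obtain ⟨ρ, hρ0, hρ⟩ := hL r' hr'
    set F : S → ℝ := fun x => f' (g x) with hF
    have hFm : Measurable F := hf'cont.measurable.comp meas_g
    have hFnn : ∀ x, 0 ≤ F x := fun x => hf'nn _
    have hFB : ∀ x, F x ≤ B := fun x => hB _
    have hF0C : ∀ x ∈ C, F x = 0 := by
      intro x hx
      show f' (g x) = 0
      rw [hgC x hx]
      exact hvan y0 (by rw [infDist_zero_of_mem (hy0 hCne)]; exact hr')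
    have hsupp : ∀ x, F x ≠ 0 → ρ ≤ infDist x C := by
      intro x hFx
      by_cases hxC : x ∈ C
      · exact absurd (hF0C x hxC) hFx
      · apply hρ x hxC
        by_contra hlt
        push_neg at hlt
        apply hFx
        show f' (g x) = 0
        rw [hgC' x hxC]
        exact hvan _ hlt
    set φ : S → ℝ≥0 := fun x => Real.toNNReal (min 1 (infDist x C / (ρ/2) - 1)) with hφ
    have hφcont : Continuous φ :=
      continuous_real_toNNReal.comp
        (Continuous.min continuous_const
          (((continuous_infDist_pt C).div_const _).sub continuous_const))
    have hφ1 : ∀ x, ρ ≤ infDist x C → φ x = 1 := by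
      intro x hx
      have h2 : (1:ℝ) ≤ infDist x C / (ρ/2) - 1 := by
        have hd : (2:ℝ) ≤ infDist x C / (ρ/2) := by
          rw [le_div_iff₀ (by positivity)]
          linarith
        linarith
      show Real.toNNReal (min 1 (infDist x C / (ρ/2) - 1)) = 1
      rw [min_eq_left h2]
      exact Real.toNNReal_one
    have hφ0 : ∀ x, infDist x C ≤ ρ/2 → φ x = 0 := by
      intro x hx
      have h2 : infDist x C / (ρ/2) - 1 ≤ 0 := by
        rw [sub_nonpos, div_le_one (by positivity)]
        exact hx
      show Real.toNNReal (min 1 (infDist x C / (ρ/2) - 1)) = 0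
      rw [min_eq_right (le_trans h2 zero_le_one)]
      exact Real.toNNReal_of_nonpos h2
    have hφle1 : ∀ x, φ x ≤ 1 := by
      intro x
      show Real.toNNReal (min 1 (infDist x C / (ρ/2) - 1)) ≤ 1
      calc Real.toNNReal (min 1 (infDist x C / (ρ/2) - 1))
          ≤ Real.toNNReal 1 := Real.toNNReal_mono (min_le_left _ _)
        _ = 1 := Real.toNNReal_one
    have hfin : ∀ m : Measure S, MemMO C m →
        IsFiniteMeasure (m.withDensity fun x => (φ x : ℝ≥0∞)) := by
      intro m hm
      constructor
      rw [withDensity_apply _ MeasurableSet.univ, setLIntegral_univ]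
      calc ∫⁻ x, (φ x : ℝ≥0∞) ∂m
          ≤ ∫⁻ x, {x : S | ρ/2 ≤ infDist x C}.indicator (fun _ => 1) x ∂m := by
            apply lintegral_mono
            intro x
            show (φ x : ℝ≥0∞) ≤ {x : S | ρ/2 ≤ infDist x C}.indicator (fun _ => 1) x
            by_cases hx : ρ/2 ≤ infDist x C
            · rw [Set.indicator_of_mem (show x ∈ {x : S | ρ/2 ≤ infDist x C} from hx)]
              exact_mod_cast hφle1 x
            · push_neg at hx
              rw [Set.indicator_of_notMem
                (show x ∉ {x : S | ρ/2 ≤ infDist x C} by simpa using hx.not_ge), hφ0 x hx.le]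
              simp
        _ = m {x : S | ρ/2 ≤ infDist x C} := by
            rw [lintegral_indicator (measurableSet_level C (ρ/2))]
            simp
        _ < ⊤ := hm.2 (ρ/2) (by positivity)
    set FM : FiniteMeasure S := ⟨μ.withDensity fun x => (φ x : ℝ≥0∞), hfin μ hμ⟩ with hFM
    set FMn : ℕ → FiniteMeasure S :=
      fun n => ⟨(μn n).withDensity fun x => (φ x : ℝ≥0∞), hfin _ (hμn n)⟩ with hFMn
    have hden : ∀ (m : Measure S) (ψ : S → ℝ),
        ∫ x, ψ x ∂(m.withDensity fun x => (φ x : ℝ≥0∞)) = ∫ x, φ x • ψ x ∂m :=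
      fun m ψ => integral_withDensity_eq_integral_smul hφcont.measurable ψ
    have hFMtends : Tendsto FMn atTop (𝓝 FM) := by
      rw [FiniteMeasure.tendsto_iff_forall_integral_tendsto]
      intro ψ
      set p : S → ℝ := fun x => (φ x : ℝ) * max (ψ x) 0 with hp
      set q : S → ℝ := fun x => (φ x : ℝ) * max (-ψ x) 0 with hq
      have hφcoe : Continuous fun x => (φ x : ℝ) := continuous_subtype_val.comp hφcont
      have hpcont : Continuous p := hφcoe.mul (ψ.continuous.max continuous_const)
      have hqcont : Continuous q := hφcoe.mul (ψ.continuous.neg.max continuous_const)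
      have hbnd : ∀ (a : ℝ) (x : S), max a 0 ≤ |a| := fun a x =>
        max_le (le_abs_self a) (abs_nonneg a)
      have hpco : IsCO C p := by
        refine ⟨hpcont.continuousOn, ?_, ⟨‖ψ‖, ?_⟩, ⟨ρ/2, by positivity, ?_⟩⟩
        · intro x
          exact mul_nonneg (φ x).2 (le_max_right _ _)
        · intro x
          calc (φ x : ℝ) * max (ψ x) 0 ≤ 1 * max (ψ x) 0 := by
                apply mul_le_mul_of_nonneg_right _ (le_max_right _ _)
                exact_mod_cast hφle1 x
            _ = max (ψ x) 0 := one_mul _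
            _ ≤ |ψ x| := hbnd (ψ x) x
            _ ≤ ‖ψ‖ := by rw [← Real.norm_eq_abs]; exact ψ.norm_coe_le_norm x
        · intro x hx
          show (φ x : ℝ) * max (ψ x) 0 = 0
          rw [hφ0 x hx.le]
          simp
      have hqco : IsCO C q := by
        refine ⟨hqcont.continuousOn, ?_, ⟨‖ψ‖, ?_⟩, ⟨ρ/2, by positivity, ?_⟩⟩
        · intro x
          exact mul_nonneg (φ x).2 (le_max_right _ _)
        · intro x
          calc (φ x : ℝ) * max (-ψ x) 0 ≤ 1 * max (-ψ x) 0 := by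
                apply mul_le_mul_of_nonneg_right _ (le_max_right _ _)
                exact_mod_cast hφle1 x
            _ = max (-ψ x) 0 := one_mul _
            _ ≤ |(-ψ x)| := hbnd (-ψ x) x
            _ ≤ ‖ψ‖ := by rw [abs_neg, ← Real.norm_eq_abs]; exact ψ.norm_coe_le_norm x
        · intro x hx
          show (φ x : ℝ) * max (-ψ x) 0 = 0
          rw [hφ0 x hx.le]
          simp
      have hψeq : ∀ x : S, (φ x) • ψ x = p x - q x := by
        intro x
        show (φ x) • ψ x = (φ x : ℝ) * max (ψ x) 0 - (φ x : ℝ) * max (-ψ x) 0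
        rw [← mul_sub, max_zero_sub_max_neg_zero_eq_self, NNReal.smul_def, smul_eq_mul]
      have hsub : ∀ m : Measure S, MemMO C m →
          ∫ x, (φ x) • ψ x ∂m = ∫ x, p x ∂m - ∫ x, q x ∂m := by
        intro m hm
        rw [← integral_sub (isCO_integrable hC hpco hm) (isCO_integrable hC hqco hm)]
        exact integral_congr_ae (Eventually.of_forall hψeq)
      have e1 : ∀ n, ∫ x, ψ x ∂((FMn n : Measure S))
          = ∫ x, p x ∂(μn n) - ∫ x, q x ∂(μn n) := by
        intro n
        show ∫ x, ψ x ∂((μn n).withDensity fun x => (φ x : ℝ≥0∞)) = _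
        rw [hden (μn n) ψ, hsub (μn n) (hμn n)]
      have e2 : ∫ x, ψ x ∂((FM : Measure S)) = ∫ x, p x ∂μ - ∫ x, q x ∂μ := by
        show ∫ x, ψ x ∂(μ.withDensity fun x => (φ x : ℝ≥0∞)) = _
        rw [hden μ ψ, hsub μ hμ]
      rw [e2]
      simp only [e1]
      exact (hconv p hpco).sub (hconv q hqco)
    have hν_le : (FM : Measure S) ≤ μ := by
      rw [Measure.le_iff]
      intro s hs
      show (μ.withDensity fun x => (φ x : ℝ≥0∞)) s ≤ μ s
      rw [withDensity_apply _ hs]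
      calc ∫⁻ x in s, (φ x : ℝ≥0∞) ∂μ
          ≤ ∫⁻ _ in s, 1 ∂μ := lintegral_mono fun x => by
            show (φ x : ℝ≥0∞) ≤ 1
            exact_mod_cast hφle1 x
        _ = μ s := by simp
    have hDsub : {x : S | ¬ ContinuousAt F x}
        ⊆ C ∪ {x | x ∈ Cᶜ ∧ ¬ ContinuousWithinAt h Cᶜ x} := by
      intro x hx
      by_cases hxC : x ∈ C
      · exact Or.inl hxC
      · right
        refine ⟨hxC, fun hcw => hx ?_⟩
        have hca : ContinuousAt h x := hcw.continuousAt (hC.isOpen_compl.mem_nhds hxC)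
        have hgh : g =ᶠ[𝓝 x] h := by
          filter_upwards [hC.isOpen_compl.mem_nhds hxC] with y hy using hgC' y hy
        have hcg : ContinuousAt g x := hca.congr hgh.symm
        exact hf'cont.continuousAt.comp hcg
    have hνcont : (FM : Measure S) {x | ¬ ContinuousAt F x} = 0 := by
      apply le_antisymm _ zero_le
      calc (FM : Measure S) {x | ¬ ContinuousAt F x}
          ≤ μ {x | ¬ ContinuousAt F x} := Measure.le_iff'.mp hν_le _
        _ ≤ μ (C ∪ {x | x ∈ Cᶜ ∧ ¬ ContinuousWithinAt h Cᶜ x}) := measure_mono hDsub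
        _ ≤ μ C + μ {x | x ∈ Cᶜ ∧ ¬ ContinuousWithinAt h Cᶜ x} := measure_union_le _ _
        _ = 0 := by rw [hμ.1, hdisc, add_zero]
    have hW := keyW hFMtends hFm hFnn hFB hνcont
    have eF : ∀ m : Measure S,
        ∫ x, F x ∂(m.withDensity fun x => (φ x : ℝ≥0∞)) = ∫ x, F x ∂m := by
      intro m
      rw [hden m F]
      congr 1
      funext x
      by_cases hFx : F x = 0
      · rw [hFx]
        simp
      · rw [hφ1 x (hsupp x hFx)]
        simp
    have eH : ∀ m : Measure S, m C = 0 → ∫ x, f' (h x) ∂m = ∫ x, F x ∂m := by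
      intro m hm
      apply integral_congr_ae
      filter_upwards [hgae m hm] with x hx
      show f' (h x) = f' (g x)
      rw [hx]
    have hmid : Tendsto (fun n => ∫ x, F x ∂(μn n)) atTop (𝓝 (∫ x, F x ∂μ)) := by
      have h2 : ∫ x, F x ∂((FM : Measure S)) = ∫ x, F x ∂μ := eF μ
      rw [h2] at hW
      exact hW.congr fun n => eF (μn n)
    rw [eH μ hμ.1]
    exact hmid.congr fun n => (eH (μn n) (hμn n).1).symm
  refine ⟨part1 μ hμ, fun n => part1 (μn n) (hμn n), ?_, key⟩
  intro f' hf'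
  have hf'cont : Continuous f' := isCO_continuous hC' hf'
  have emap : ∀ m : Measure S, m C = 0 →
      ∫ y, f' y ∂(Measure.map h m) = ∫ x, f' (h x) ∂m := by
    intro m hm
    rw [hmapeq m hm, integral_map meas_g.aemeasurable hf'cont.aestronglyMeasurable]
    apply integral_congr_ae
    filter_upwards [hgae m hm] with x hx
    rw [hx]
  rw [emap μ hμ.1]
  exact (key f' hf').congr fun n => (emap (μn n) (hμn n).1).symm
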